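/- arXiv:1902.06869 — 2 statements merged into one kernel-verified Lean document; each statement's English description precedes it below -/
import Mathlib

section
/- Let σ > 0, 0 < ρ < 1, m > 0, K > 0, and r₁, r₂ > 0. Then the bivariate Rician shadowed joint PDF given in integral form, f_{R₁,R₂}(r₁,r₂) = [8(mρ/(mρ+K))^m/(σ⁶ρ(1−ρ)²)] · r₁r₂ · exp(−(r₁²+r₂²)/(σ²(1−ρ))) · ∫₀^∞ x·exp(−(1+ρ)x²/(σ²ρ(1−ρ)))·I₀(2r₁x/(σ²(1−ρ)))·I₀(2r₂x/(σ²(1−ρ)))·₁F₁(m,1;Kx²/(σ²ρ(ρm+K))) dx, equals the convergent power series ∑_{k=0}^∞ ∑_{i=0}^{k} ∑_{n=0}^{i} α(k,i,n) r₁^{2n+1} r₂^{2(i−n)+1} exp(−(r₁²+r₂²)/(σ²(1−ρ))). -/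
open MeasureTheory

/-- Pochhammer symbol (ascending factorial) `(m)_k = m (m+1) ⋯ (m+k-1)`. -/
noncomputable def poch (m : ℝ) (k : ℕ) : ℝ := ∏ j ∈ Finset.range k, (m + j)

/-- Modified Bessel function of the first kind of order zero,
`I₀(y) = ∑ (y/2)^{2n} / (n!)²`. -/
noncomputable def I0 (y : ℝ) : ℝ := ∑' n : ℕ, (y / 2) ^ (2 * n) / (Nat.factorial n : ℝ) ^ 2

/-- Confluent hypergeometric function `₁F₁(m, 1; z) = ∑ (m)_n zⁿ / (n!)²`. -/
noncomputable def F11 (m z : ℝ) : ℝ := ∑' n : ℕ, poch m n * z ^ n / (Nat.factorial n : ℝ) ^ 2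

/-- Series coefficient `α(k,i,n)` of the bivariate Rician shadowed joint PDF. -/
noncomputable def alpha (σ ρ m K : ℝ) (k i n : ℕ) : ℝ :=
  (8 * Real.rpow (m * ρ / (m * ρ + K)) m / (σ ^ 6 * ρ * (1 - ρ) ^ 2)) *
  (poch m (k - i) * (K / (σ ^ 2 * ρ * (ρ * m + K))) ^ (k - i) /
    (Nat.factorial (k - i) : ℝ) ^ 2) *
  (1 / ((Nat.factorial n : ℝ) ^ 2 * (Nat.factorial (i - n) : ℝ) ^ 2 *
    (σ ^ 2 * (1 - ρ)) ^ (2 * i))) *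
  ((Nat.factorial k : ℝ) / (2 * ((1 + ρ) / (σ ^ 2 * ρ * (1 - ρ))) ^ (k + 1)))

/-- Closed-form power series of the bivariate Rician shadowed joint PDF. -/
noncomputable def fpdf (σ ρ m K r₁ r₂ : ℝ) : ℝ :=
  ∑' k : ℕ, ∑ i ∈ Finset.range (k + 1), ∑ n ∈ Finset.range (i + 1),
    alpha σ ρ m K k i n * r₁ ^ (2 * n + 1) * r₂ ^ (2 * (i - n) + 1) *
      Real.exp (-(r₁ ^ 2 + r₂ ^ 2) / (σ ^ 2 * (1 - ρ)))

/-- `G(j,l,q,γ) = (−1)^j γ^{2(l+j+1)} q! (σ²(1−ρ))^{q+1−j} / (j!·4(l+j+1))`. -/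
noncomputable def Gfun (σ ρ : ℝ) (j l q : ℕ) (γ : ℝ) : ℝ :=
  (-1 : ℝ) ^ j * γ ^ (2 * (l + j + 1)) * (Nat.factorial q : ℝ) *
    (σ ^ 2 * (1 - ρ)) ^ ((q : ℤ) + 1 - (j : ℤ)) /
    ((Nat.factorial j : ℝ) * (4 * (l + j + 1)))

/-- `Ḡ(λ,k)`, the `(2(k+1))`-th moment of the BPP distance distribution. -/
noncomputable def Gbar (Dalt ra lam : ℝ) (k : ℕ) : ℝ :=
  ((Dalt ^ 2 + lam ^ 2 + ra ^ 2) ^ (k + 2) - (Dalt ^ 2 + lam ^ 2) ^ (k + 2)) /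
    (ra ^ 2 * (k + 2))


open Set Real

lemma gauss_moment {a : ℝ} (ha : 0 < a) (N : ℕ) :
    ∫ x in Ioi (0:ℝ), x ^ (2*N+1) * Real.exp (-a * x^2)
      = (N.factorial : ℝ) / (2 * a^(N+1)) := by
  have hN : (0:ℝ) ≤ (N:ℝ) := Nat.cast_nonneg N
  have h := integral_rpow_mul_exp_neg_mul_rpow (p := 2) (q := (2*(N:ℝ)+1))
    (by norm_num) (by linarith) ha
  rw [show ∫ x in Ioi (0:ℝ), x ^ (2*N+1) * Real.exp (-a * x^2)
      = ∫ x in Ioi (0:ℝ), x ^ ((2*(N:ℝ)+1)) * Real.exp (-a * x ^ (2:ℝ)) from ?_]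
  · rw [h, show (-(2*(N:ℝ)+1+1)/2) = -((N:ℝ)+1) by ring,
        show (2*(N:ℝ)+1+1)/2 = ((N:ℝ)+1) by ring,
        Real.Gamma_nat_eq_factorial, Real.rpow_neg ha.le,
        show ((N:ℝ)+1) = ((N+1 : ℕ):ℝ) by push_cast; ring, Real.rpow_natCast]
    field_simp
  · refine setIntegral_congr_fun measurableSet_Ioi (fun x hx => ?_)
    rw [Real.rpow_two, show ((2*(N:ℝ)+1)) = ((2*N+1 : ℕ):ℝ) by push_cast; ring,
      Real.rpow_natCast]

lemma gauss_integrable {a : ℝ} (ha : 0 < a) (N : ℕ) :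
    IntegrableOn (fun x : ℝ => x ^ (2*N+1) * Real.exp (-a * x^2)) (Ioi 0) := by
  have h := integrableOn_rpow_mul_exp_neg_mul_sq ha (s := (2*(N:ℝ)+1))
    (by have : (0:ℝ) ≤ (N:ℝ) := Nat.cast_nonneg N; linarith)
  refine h.congr_fun (fun x hx => ?_) measurableSet_Ioi
  dsimp only
  rw [show ((2*(N:ℝ)+1)) = ((2*N+1 : ℕ):ℝ) by push_cast; ring, Real.rpow_natCast]


lemma gauss_moment' {a : ℝ} (ha : 0 < a) (N : ℕ) :
    ∫ x in Ioi (0:ℝ), x ^ (2*N+1) * Real.exp (-(a * x^2))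
      = (N.factorial : ℝ) / (2 * a^(N+1)) := by
  have h := gauss_moment ha N
  simpa [neg_mul] using h

lemma gauss_integrable' {a : ℝ} (ha : 0 < a) (N : ℕ) :
    IntegrableOn (fun x : ℝ => x ^ (2*N+1) * Real.exp (-(a * x^2))) (Ioi 0) := by
  have h := gauss_integrable ha N
  simpa [neg_mul] using h


lemma poch_succ (m : ℝ) (k : ℕ) : poch m (k+1) = poch m k * (m + k) :=
  Finset.prod_range_succ _ _

lemma poch_pos {m : ℝ} (hm : 0 < m) (k : ℕ) : 0 < poch m k :=
  Finset.prod_pos fun j _ => by positivity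

lemma pow_div_factorial_le_exp {x : ℝ} (hx : 0 ≤ x) (n : ℕ) :
    x^n/(n.factorial : ℝ) ≤ Real.exp x := by
  calc x^n/(n.factorial:ℝ) ≤ ∑ i ∈ Finset.range (n+1), x^i/i.factorial :=
        Finset.single_le_sum (f := fun i => x^i/(i.factorial:ℝ))
          (fun i _ => by positivity) (Finset.self_mem_range_succ n)
    _ ≤ Real.exp x := Real.sum_le_exp_of_nonneg hx _

lemma fact_one_le (n : ℕ) : (1:ℝ) ≤ (n.factorial : ℝ) := by
  exact_mod_cast n.factorial_pos

lemma summable_I0_terms (y : ℝ) :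
    Summable (fun n : ℕ => (y/2)^(2*n)/(n.factorial : ℝ)^2) := by
  have key : ∀ n : ℕ, (y/2)^(2*n)/(n.factorial : ℝ)^2 ≤ ((y/2)^2)^n/(n.factorial : ℝ) := by
    intro n
    rw [pow_mul]
    have h1 := fact_one_le n
    have h2 : (0:ℝ) ≤ ((y/2)^2)^n := by positivity
    apply div_le_div_of_nonneg_left h2 (by linarith) ?_
    nlinarith
  exact Summable.of_nonneg_of_le (fun n => div_nonneg (by rw [pow_mul]; positivity) (by positivity)) key
    (Real.summable_pow_div_factorial _)

lemma summable_F11_terms {m : ℝ} (hm : 0 < m) {z : ℝ} (hz : 0 ≤ z) :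
    Summable (fun s : ℕ => poch m s * z^s / (s.factorial : ℝ)^2) := by
  obtain ⟨N₁, hN₁⟩ := exists_nat_ge m
  obtain ⟨N₂, hN₂⟩ := exists_nat_ge (4*z)
  refine summable_of_ratio_norm_eventually_le (r := 1/2) (by norm_num) ?_
  rw [Filter.eventually_atTop]
  refine ⟨max N₁ N₂ + 1, fun n hn => ?_⟩
  have hn₁ : N₁ ≤ n := le_trans (le_max_left N₁ N₂) (by omega)
  have hn₂ : N₂ ≤ n := le_trans (le_max_right N₁ N₂) (by omega)
  have h1 : m ≤ (n:ℝ) := hN₁.trans (Nat.cast_le.2 hn₁)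
  have h2 : 4*z ≤ (n:ℝ) := hN₂.trans (Nat.cast_le.2 hn₂)
  have hfn : (0:ℝ) < (n.factorial : ℝ) := by exact_mod_cast n.factorial_pos
  have hp := poch_pos hm n
  have hterm : poch m (n+1) * z^(n+1) / ((n+1).factorial : ℝ)^2
      = (poch m n * z^n / (n.factorial : ℝ)^2) * ((m+n)*z/((n:ℝ)+1)^2) := by
    rw [poch_succ, Nat.factorial_succ]
    push_cast
    field_simp
    ring
  have ht0 : 0 ≤ poch m n * z^n / (n.factorial : ℝ)^2 :=
    div_nonneg (mul_nonneg hp.le (pow_nonneg hz n)) (by positivity)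
  rw [Real.norm_eq_abs, Real.norm_eq_abs, hterm,
    abs_of_nonneg (mul_nonneg ht0 (by positivity)), abs_of_nonneg ht0]
  have hle : (m+n)*z/((n:ℝ)+1)^2 ≤ 1/2 := by
    rw [div_le_div_iff₀ (by positivity) (by norm_num)]
    nlinarith [sq_nonneg ((n:ℝ)+1)]
  calc poch m n * z^n / (n.factorial : ℝ)^2 * ((m+n)*z/((n:ℝ)+1)^2)
      ≤ poch m n * z^n / (n.factorial : ℝ)^2 * (1/2) :=
        mul_le_mul_of_nonneg_left hle ht0
    _ = 1/2 * (poch m n * z^n / (n.factorial : ℝ)^2) := by ring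

lemma summable_u {m w : ℝ} (hm : 0 < m) (hw0 : 0 ≤ w) (hw1 : w < 1) :
    Summable (fun s : ℕ => poch m s * w^s / (s.factorial : ℝ)) := by
  obtain ⟨N, hN⟩ := exists_nat_ge (2*m/(1-w))
  refine summable_of_ratio_norm_eventually_le (r := (1+w)/2) (by linarith) ?_
  rw [Filter.eventually_atTop]
  refine ⟨N + 1, fun n hn => ?_⟩
  have h1 : 2*m/(1-w) ≤ (n:ℝ) := hN.trans (Nat.cast_le.2 (by omega))
  have h1' : 2*m ≤ (1-w)*(n:ℝ) := by
    rw [div_le_iff₀ (by linarith)] at h1; linarith [h1]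
  have hfn : (0:ℝ) < (n.factorial : ℝ) := by exact_mod_cast n.factorial_pos
  have hp := poch_pos hm n
  have hterm : poch m (n+1) * w^(n+1) / ((n+1).factorial : ℝ)
      = (poch m n * w^n / (n.factorial : ℝ)) * ((m+n)*w/((n:ℝ)+1)) := by
    rw [poch_succ, Nat.factorial_succ]
    push_cast
    field_simp
    ring
  have ht0 : 0 ≤ poch m n * w^n / (n.factorial : ℝ) :=
    div_nonneg (mul_nonneg hp.le (pow_nonneg hw0 n)) hfn.le
  have hmn : (0:ℝ) ≤ m + n := by positivity
  have hr0 : (0:ℝ) ≤ (m+n)*w/((n:ℝ)+1) :=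
    div_nonneg (mul_nonneg hmn hw0) (by positivity)
  rw [Real.norm_eq_abs, Real.norm_eq_abs, hterm,
    abs_of_nonneg (mul_nonneg ht0 hr0), abs_of_nonneg ht0]
  have hle : (m+n)*w/((n:ℝ)+1) ≤ (1+w)/2 := by
    rw [div_le_div_iff₀ (by positivity) (by norm_num)]
    nlinarith [(Nat.cast_nonneg n : (0:ℝ) ≤ n)]
  calc poch m n * w^n / (n.factorial : ℝ) * ((m+n)*w/((n:ℝ)+1))
      ≤ poch m n * w^n / (n.factorial : ℝ) * ((1+w)/2) :=
        mul_le_mul_of_nonneg_left hle ht0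
    _ = (1+w)/2 * (poch m n * w^n / (n.factorial : ℝ)) := by ring


lemma I0_nonneg (y : ℝ) : 0 ≤ I0 y :=
  tsum_nonneg fun n => div_nonneg (by rw [pow_mul]; positivity) (by positivity)

lemma F11_nonneg {m z : ℝ} (hm : 0 < m) (hz : 0 ≤ z) : 0 ≤ F11 m z :=
  tsum_nonneg fun n => div_nonneg (mul_nonneg (poch_pos hm n).le (pow_nonneg hz n))
    (by positivity)

lemma exp_tsum_le {z : ℝ} (hz : 0 ≤ z) : ∑' n : ℕ, z^n/(n.factorial : ℝ) ≤ Real.exp z :=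
  Real.tsum_le_of_sum_range_le (fun n => by positivity)
    (fun n => Real.sum_le_exp_of_nonneg hz n)

lemma I0_le_quad {y lam : ℝ} (hy : 0 ≤ y) (hlam : 0 < lam) :
    I0 y ≤ Real.exp lam * Real.exp (y^2/(4*lam)) := by
  have hsum2 : Summable (fun n : ℕ => Real.exp lam * ((y^2/(4*lam))^n/(n.factorial : ℝ))) :=
    (Real.summable_pow_div_factorial _).mul_left _
  have hle : ∀ n : ℕ, (y/2)^(2*n)/(n.factorial : ℝ)^2
      ≤ Real.exp lam * ((y^2/(4*lam))^n/(n.factorial : ℝ)) := by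
    intro n
    have hfn : (0:ℝ) < (n.factorial : ℝ) := by exact_mod_cast n.factorial_pos
    have h1 : (y/2)^(2*n)/(n.factorial : ℝ)^2
        = (lam^n/(n.factorial:ℝ)) * ((y^2/(4*lam))^n/(n.factorial : ℝ)) := by
      rw [pow_mul]
      rw [show (y/2)^2 = lam * (y^2/(4*lam)) by field_simp; ring, mul_pow, sq ((n.factorial:ℝ)),
        ← div_mul_div_comm]
    rw [h1]
    have h2 : lam^n/(n.factorial:ℝ) ≤ Real.exp lam := pow_div_factorial_le_exp hlam.le n
    have h3 : (0:ℝ) ≤ (y^2/(4*lam))^n/(n.factorial : ℝ) := by positivity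
    exact mul_le_mul_of_nonneg_right h2 h3
  calc I0 y ≤ ∑' n : ℕ, Real.exp lam * ((y^2/(4*lam))^n/(n.factorial : ℝ)) :=
        Summable.tsum_le_tsum hle (summable_I0_terms y) hsum2
    _ = Real.exp lam * ∑' n : ℕ, (y^2/(4*lam))^n/(n.factorial : ℝ) := tsum_mul_left
    _ ≤ Real.exp lam * Real.exp (y^2/(4*lam)) := by
        have := exp_tsum_le (z := y^2/(4*lam)) (by positivity)
        exact mul_le_mul_of_nonneg_left this (Real.exp_nonneg _)

lemma F11_le {m w t : ℝ} (hm : 0 < m) (hw0 : 0 ≤ w) (hw1 : w < 1) (ht : 0 ≤ t) :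
    F11 m (w*t) ≤ (∑' s : ℕ, poch m s * w^s/(s.factorial : ℝ)) * Real.exp t := by
  have hsum2 : Summable (fun s : ℕ => (poch m s * w^s/(s.factorial : ℝ)) * Real.exp t) :=
    (summable_u hm hw0 hw1).mul_right _
  have hle : ∀ s : ℕ, poch m s * (w*t)^s / (s.factorial : ℝ)^2
      ≤ (poch m s * w^s/(s.factorial : ℝ)) * Real.exp t := by
    intro s
    have hfn : (0:ℝ) < (s.factorial : ℝ) := by exact_mod_cast s.factorial_pos
    have h1 : poch m s * (w*t)^s / (s.factorial : ℝ)^2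
        = (poch m s * w^s/(s.factorial:ℝ)) * (t^s/(s.factorial : ℝ)) := by
      rw [mul_pow]; field_simp
    rw [h1]
    exact mul_le_mul_of_nonneg_left (pow_div_factorial_le_exp ht s)
      (div_nonneg (mul_nonneg (poch_pos hm s).le (pow_nonneg hw0 s)) hfn.le)
  calc F11 m (w*t) ≤ ∑' s : ℕ, (poch m s * w^s/(s.factorial : ℝ)) * Real.exp t :=
        Summable.tsum_le_tsum hle (summable_F11_terms hm (by positivity)) hsum2
    _ = (∑' s : ℕ, poch m s * w^s/(s.factorial : ℝ)) * Real.exp t := tsum_mul_right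


private lemma sig_ext {k₁ k₂ i₁ i₂ n₁ n₂ : ℕ} (hk : k₁ = k₂) (hi : i₁ = i₂) (hn : n₁ = n₂)
    (h₁ : i₁ < k₁ + 1) (h₂ : n₁ < i₁ + 1) (h₃ : i₂ < k₂ + 1) (h₄ : n₂ < i₂ + 1) :
    (⟨k₁, ⟨i₁, h₁⟩, ⟨n₁, h₂⟩⟩ : Σ k : ℕ, Σ i : Fin (k+1), Fin (i.1+1))
      = ⟨k₂, ⟨i₂, h₃⟩, ⟨n₂, h₄⟩⟩ := by
  subst hk; subst hi; subst hn; rfl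

noncomputable def triEquiv : (Σ k : ℕ, Σ i : Fin (k+1), Fin (i.1+1)) ≃ (ℕ × ℕ × ℕ) where
  toFun y := (y.2.2.1, y.2.1.1 - y.2.2.1, y.1 - y.2.1.1)
  invFun x := ⟨x.1+x.2.1+x.2.2, ⟨x.1+x.2.1, show x.1+x.2.1 < x.1+x.2.1+x.2.2+1 by omega⟩,
    ⟨x.1, show x.1 < x.1+x.2.1+1 by omega⟩⟩
  left_inv := by
    rintro ⟨k, ⟨i, hi⟩, ⟨n, hn⟩⟩
    have hi' : i ≤ k := Nat.lt_succ_iff.mp hi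
    have hn' : n ≤ i := Nat.lt_succ_iff.mp hn
    exact sig_ext (show n + (i - n) + (k - i) = k by omega) (show n + (i - n) = i by omega)
      rfl _ _ _ _
  right_inv := by
    rintro ⟨p, q, s⟩
    show ((p : ℕ), (p+q) - p, (p+q+s) - (p+q)) = (p, q, s)
    have h1 : (p+q) - p = q := by omega
    have h2 : (p+q+s) - (p+q) = s := by omega
    rw [h1, h2]

lemma tsum_triple_reindex (g : ℕ → ℕ → ℕ → ENNReal) :
    ∑' pqs : ℕ × ℕ × ℕ, g pqs.1 pqs.2.1 pqs.2.2
      = ∑' k : ℕ, ∑ i ∈ Finset.range (k+1), ∑ n ∈ Finset.range (i+1), g n (i-n) (k-i) := by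
  rw [← triEquiv.tsum_eq (fun pqs : ℕ × ℕ × ℕ => g pqs.1 pqs.2.1 pqs.2.2)]
  rw [ENNReal.tsum_sigma']
  congr 1
  ext k
  rw [ENNReal.tsum_sigma']
  rw [tsum_fintype]
  rw [← Fin.sum_univ_eq_sum_range (fun i => ∑ n ∈ Finset.range (i+1), g n (i-n) (k-i)) (k+1)]
  congr 1
  ext i
  rw [tsum_fintype]
  exact Fin.sum_univ_eq_sum_range (fun n => g n (i.1-n) (k-i.1)) (i.1+1)


lemma main_core {m a c b₁ b₂ : ℝ} (hm : 0 < m) (ha : 0 < a) (hc : 0 < c) (hca : c < a)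
    (hb₁ : 0 < b₁) (hb₂ : 0 < b₂) :
    Summable (fun k : ℕ => ∑ i ∈ Finset.range (k+1), ∑ n ∈ Finset.range (i+1),
      ((b₁/2)^(2*n)/(n.factorial : ℝ)^2) * ((b₂/2)^(2*(i-n))/((i-n).factorial : ℝ)^2)
        * (poch m (k-i) * c^(k-i)/((k-i).factorial : ℝ)^2)
        * ((k.factorial : ℝ)/(2*a^(k+1)))) ∧
    (∫ x in Ioi (0:ℝ),
        x * Real.exp (-(a*x^2)) * I0 (b₁*x) * I0 (b₂*x) * F11 m (c*x^2))
      = ∑' k : ℕ, ∑ i ∈ Finset.range (k+1), ∑ n ∈ Finset.range (i+1),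
        ((b₁/2)^(2*n)/(n.factorial : ℝ)^2) * ((b₂/2)^(2*(i-n))/((i-n).factorial : ℝ)^2)
          * (poch m (k-i) * c^(k-i)/((k-i).factorial : ℝ)^2)
          * ((k.factorial : ℝ)/(2*a^(k+1))) := by
  classical
  -- abbreviations
  set Cf : ℕ → ℕ → ℕ → ℝ := fun p q s =>
    ((b₁/2)^(2*p)/(p.factorial : ℝ)^2) * ((b₂/2)^(2*q)/(q.factorial : ℝ)^2)
      * (poch m s * c^s/(s.factorial : ℝ)^2) with hCf_def
  set V : ℕ → ℝ := fun N => (N.factorial : ℝ)/(2*a^(N+1)) with hV_def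
  have hCf0 : ∀ p q s, 0 ≤ Cf p q s := by
    intro p q s
    have := (poch_pos hm s).le
    have : (0:ℝ) ≤ poch m s * c^s := mul_nonneg ‹_› (by positivity)
    rw [hCf_def]
    have h1 : (0:ℝ) ≤ (b₁/2)^(2*p) := by rw [pow_mul]; positivity
    have h2 : (0:ℝ) ≤ (b₂/2)^(2*q) := by rw [pow_mul]; positivity
    positivity
  have hV0 : ∀ N, 0 ≤ V N := fun N => by rw [hV_def]; positivity
  set g : ℝ → ℝ := fun x => x * Real.exp (-(a*x^2)) * I0 (b₁*x) * I0 (b₂*x) * F11 m (c*x^2)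
    with hg_def
  set T : ℕ → ℕ → ℕ → ℝ → ℝ := fun p q s x =>
    Cf p q s * (x^(2*(p+q+s)+1) * Real.exp (-(a*x^2))) with hT_def
  -- real factorization of T
  have hTreal : ∀ p q s x, T p q s x
      = (x * Real.exp (-(a*x^2))) * ((b₁*x/2)^(2*p)/(p.factorial : ℝ)^2)
        * ((b₂*x/2)^(2*q)/(q.factorial : ℝ)^2)
        * (poch m s * (c*x^2)^s/(s.factorial : ℝ)^2) := by
    intro p q s x
    simp only [hT_def, hCf_def]
    rw [show 2*(p+q+s)+1 = 2*p+(2*q+(2*s+1)) by ring, pow_add, pow_add, pow_add, pow_one]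
    rw [show (b₁*x/2)^(2*p) = (b₁/2)^(2*p) * x^(2*p) by rw [← mul_pow]; ring_nf,
        show (b₂*x/2)^(2*q) = (b₂/2)^(2*q) * x^(2*q) by rw [← mul_pow]; ring_nf,
        show (c*x^2)^s = c^s * x^(2*s) by rw [pow_mul, ← mul_pow]]
    ring
  -- pointwise ENNReal expansion
  have hpt : ∀ x : ℝ, x ∈ Ioi (0:ℝ) →
      ENNReal.ofReal (g x) = ∑' pqs : ℕ × ℕ × ℕ,
        ENNReal.ofReal (T pqs.1 pqs.2.1 pqs.2.2 x) := by
    intro x hx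
    have hx0 : (0:ℝ) < x := hx
    have hIb₁ : 0 ≤ I0 (b₁*x) := I0_nonneg _
    have hIb₂ : 0 ≤ I0 (b₂*x) := I0_nonneg _
    have hxe : (0:ℝ) ≤ x * Real.exp (-(a*x^2)) := by positivity
    have hAnn : ∀ (y : ℝ) (p : ℕ), (0:ℝ) ≤ (y/2)^(2*p)/(p.factorial : ℝ)^2 :=
      fun y p => div_nonneg (by rw [pow_mul]; positivity) (by positivity)
    have hFnn : ∀ s : ℕ, (0:ℝ) ≤ poch m s * (c*x^2)^s/(s.factorial : ℝ)^2 :=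
      fun s => div_nonneg (mul_nonneg (poch_pos hm s).le (by positivity)) (by positivity)
    have hI1 : ENNReal.ofReal (I0 (b₁*x))
        = ∑' p : ℕ, ENNReal.ofReal ((b₁*x/2)^(2*p)/(p.factorial : ℝ)^2) := by
      rw [I0]
      exact ENNReal.ofReal_tsum_of_nonneg (fun p => hAnn _ p) (summable_I0_terms _)
    have hI2 : ENNReal.ofReal (I0 (b₂*x))
        = ∑' q : ℕ, ENNReal.ofReal ((b₂*x/2)^(2*q)/(q.factorial : ℝ)^2) := by
      rw [I0]
      exact ENNReal.ofReal_tsum_of_nonneg (fun q => hAnn _ q) (summable_I0_terms _)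
    have hF : ENNReal.ofReal (F11 m (c*x^2))
        = ∑' s : ℕ, ENNReal.ofReal (poch m s * (c*x^2)^s/(s.factorial : ℝ)^2) := by
      rw [F11]
      exact ENNReal.ofReal_tsum_of_nonneg hFnn (summable_F11_terms hm (by positivity))
    have hgsplit : ENNReal.ofReal (g x)
        = ENNReal.ofReal (x * Real.exp (-(a*x^2))) * ENNReal.ofReal (I0 (b₁*x))
          * ENNReal.ofReal (I0 (b₂*x)) * ENNReal.ofReal (F11 m (c*x^2)) := by
      rw [hg_def]
      rw [ENNReal.ofReal_mul (by positivity), ENNReal.ofReal_mul (by positivity),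
        ENNReal.ofReal_mul hxe]
    have hTsplit : ∀ p q s : ℕ, ENNReal.ofReal (T p q s x)
        = ENNReal.ofReal (x * Real.exp (-(a*x^2)))
          * ENNReal.ofReal ((b₁*x/2)^(2*p)/(p.factorial : ℝ)^2)
          * ENNReal.ofReal ((b₂*x/2)^(2*q)/(q.factorial : ℝ)^2)
          * ENNReal.ofReal (poch m s * (c*x^2)^s/(s.factorial : ℝ)^2) := by
      intro p q s
      rw [hTreal p q s x]
      rw [ENNReal.ofReal_mul (by exact mul_nonneg (mul_nonneg hxe (hAnn _ p)) (hAnn _ q)),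
        ENNReal.ofReal_mul (mul_nonneg hxe (hAnn _ p)), ENNReal.ofReal_mul hxe]
    rw [hgsplit, hI1, hI2, hF]
    simp only [ENNReal.tsum_prod']
    simp only [hTsplit]
    simp only [ENNReal.tsum_mul_left, ENNReal.tsum_mul_right]
  -- measurability
  have hψm : ∀ N : ℕ, Measurable (fun x : ℝ => x^(2*N+1) * Real.exp (-(a*x^2))) := by
    intro N
    exact (measurable_id.pow_const _).mul
      (((measurable_id.pow_const 2).const_mul a).neg.exp)
  have hTm : ∀ pqs : ℕ × ℕ × ℕ,
      Measurable (fun x : ℝ => ENNReal.ofReal (T pqs.1 pqs.2.1 pqs.2.2 x)) := by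
    intro pqs
    simp only [hT_def]
    exact ((hψm _).const_mul _).ennreal_ofReal
  -- lintegral of each term
  have hval : ∀ p q s : ℕ, (∫⁻ x in Ioi (0:ℝ), ENNReal.ofReal (T p q s x))
      = ENNReal.ofReal (Cf p q s * V (p+q+s)) := by
    intro p q s
    have h1 : ∀ x : ℝ, ENNReal.ofReal (T p q s x)
        = ENNReal.ofReal (Cf p q s)
          * ENNReal.ofReal (x^(2*(p+q+s)+1) * Real.exp (-(a*x^2))) := by
      intro x
      rw [hT_def]
      exact ENNReal.ofReal_mul (hCf0 p q s)
    simp only [h1]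
    rw [lintegral_const_mul' _ _ ENNReal.ofReal_ne_top]
    rw [← ofReal_integral_eq_lintegral_ofReal (gauss_integrable' ha (p+q+s))
      ((ae_restrict_iff' measurableSet_Ioi).2 (Filter.Eventually.of_forall
        (fun x hx => by have hx0 : (0:ℝ) < x := hx; positivity)))]
    rw [gauss_moment' ha (p+q+s), ← ENNReal.ofReal_mul (hCf0 p q s), hV_def]
  -- the lintegral of g
  have hL : (∫⁻ x in Ioi (0:ℝ), ENNReal.ofReal (g x))
      = ∑' pqs : ℕ × ℕ × ℕ, ENNReal.ofReal (Cf pqs.1 pqs.2.1 pqs.2.2 * V (pqs.1+pqs.2.1+pqs.2.2)) := by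
    rw [setLIntegral_congr_fun measurableSet_Ioi hpt]
    rw [lintegral_tsum (fun pqs => (hTm pqs).aemeasurable)]
    exact tsum_congr fun ⟨p, q, s⟩ => hval p q s
  -- integrable bound
  set θ : ℝ := (a+c)/2 with hθ_def
  set ε : ℝ := (a-c)/8 with hε_def
  set δ : ℝ := (a-c)/4 with hδ_def
  have hθ : 0 < θ := by rw [hθ_def]; linarith
  have hε : 0 < ε := by rw [hε_def]; linarith
  have hδ : 0 < δ := by rw [hδ_def]; linarith
  set w : ℝ := c/θ with hw_def
  have hw0 : 0 ≤ w := by rw [hw_def]; positivity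
  have hw1 : w < 1 := by rw [hw_def, div_lt_one hθ, hθ_def]; linarith
  set U : ℝ := ∑' s : ℕ, poch m s * w^s/(s.factorial : ℝ) with hU_def
  have hU0 : 0 ≤ U := tsum_nonneg fun s =>
    div_nonneg (mul_nonneg (poch_pos hm s).le (pow_nonneg hw0 s)) (by positivity)
  set lam₁ : ℝ := b₁^2/(4*ε) with hlam₁_def
  set lam₂ : ℝ := b₂^2/(4*ε) with hlam₂_def
  have hlam₁ : 0 < lam₁ := by rw [hlam₁_def]; positivity
  have hlam₂ : 0 < lam₂ := by rw [hlam₂_def]; positivity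
  set M : ℝ := Real.exp lam₁ * Real.exp lam₂ * U with hM_def
  have hM0 : 0 ≤ M := by rw [hM_def]; positivity
  have hbound : ∀ x : ℝ, x ∈ Ioi (0:ℝ) → g x ≤ M * (x * Real.exp (-(δ*x^2))) := by
    intro x hx
    have hx0 : (0:ℝ) < x := hx
    have hxe0 : (0:ℝ) ≤ x * Real.exp (-(a*x^2)) := by positivity
    have e1 : I0 (b₁*x) ≤ Real.exp lam₁ * Real.exp (ε*x^2) := by
      have h := I0_le_quad (y := b₁*x) (by positivity) hlam₁
      rwa [show (b₁*x)^2/(4*lam₁) = ε*x^2 by rw [hlam₁_def]; field_simp] at h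
    have e2 : I0 (b₂*x) ≤ Real.exp lam₂ * Real.exp (ε*x^2) := by
      have h := I0_le_quad (y := b₂*x) (by positivity) hlam₂
      rwa [show (b₂*x)^2/(4*lam₂) = ε*x^2 by rw [hlam₂_def]; field_simp] at h
    have e3 : F11 m (c*x^2) ≤ U * Real.exp (θ*x^2) := by
      have h := F11_le (t := θ*x^2) hm hw0 hw1 (by positivity)
      rwa [show w*(θ*x^2) = c*x^2 by rw [hw_def]; field_simp] at h
    have step : g x ≤ (x * Real.exp (-(a*x^2))) * (Real.exp lam₁ * Real.exp (ε*x^2))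
        * (Real.exp lam₂ * Real.exp (ε*x^2)) * (U * Real.exp (θ*x^2)) := by
      rw [hg_def]
      have m1 : x * Real.exp (-(a*x^2)) * I0 (b₁*x)
          ≤ x * Real.exp (-(a*x^2)) * (Real.exp lam₁ * Real.exp (ε*x^2)) :=
        mul_le_mul_of_nonneg_left e1 hxe0
      have m2 : x * Real.exp (-(a*x^2)) * I0 (b₁*x) * I0 (b₂*x)
          ≤ x * Real.exp (-(a*x^2)) * (Real.exp lam₁ * Real.exp (ε*x^2))
            * (Real.exp lam₂ * Real.exp (ε*x^2)) :=
        mul_le_mul m1 e2 (I0_nonneg _) (by positivity)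
      exact mul_le_mul m2 e3 (F11_nonneg hm (by positivity))
        (by positivity)
    refine le_trans step (le_of_eq ?_)
    rw [show -(δ*x^2) = -(a*x^2) + ε*x^2 + ε*x^2 + θ*x^2 by
      rw [hδ_def, hε_def, hθ_def]; ring]
    rw [Real.exp_add, Real.exp_add, Real.exp_add, hM_def]
    ring
  have hMint : Integrable (fun x : ℝ => M * (x * Real.exp (-(δ*x^2))))
      (volume.restrict (Ioi 0)) := by
    have h0 := (gauss_integrable' hδ 0).const_mul M
    have : (fun x : ℝ => M * (x^(2*0+1) * Real.exp (-(δ*x^2))))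
        = fun x : ℝ => M * (x * Real.exp (-(δ*x^2))) := by
      funext x; norm_num
    rwa [this] at h0
  have hfin : (∫⁻ x in Ioi (0:ℝ), ENNReal.ofReal (g x)) ≠ ⊤ := by
    have hle : (∫⁻ x in Ioi (0:ℝ), ENNReal.ofReal (g x))
        ≤ ∫⁻ x in Ioi (0:ℝ), ENNReal.ofReal (M * (x * Real.exp (-(δ*x^2)))) := by
      refine lintegral_mono_ae ((ae_restrict_iff' measurableSet_Ioi).2
        (Filter.Eventually.of_forall fun x hx => ENNReal.ofReal_le_ofReal (hbound x hx)))
    have heq : (∫⁻ x in Ioi (0:ℝ), ENNReal.ofReal (M * (x * Real.exp (-(δ*x^2)))))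
        = ENNReal.ofReal (∫ x in Ioi (0:ℝ), M * (x * Real.exp (-(δ*x^2)))) := by
      rw [← ofReal_integral_eq_lintegral_ofReal hMint
        ((ae_restrict_iff' measurableSet_Ioi).2 (Filter.Eventually.of_forall
          fun x hx => by have hx0 : (0:ℝ) < x := hx; positivity))]
    exact ne_top_of_le_ne_top (by rw [heq]; exact ENNReal.ofReal_ne_top) hle
  -- grouped series
  set innerR : ℕ → ℝ := fun k => ∑ i ∈ Finset.range (k+1), ∑ n ∈ Finset.range (i+1),
    Cf n (i-n) (k-i) * V k with hinnerR_def
  have hinnerR0 : ∀ k, 0 ≤ innerR k := fun k =>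
    Finset.sum_nonneg fun i _ => Finset.sum_nonneg fun n _ =>
      mul_nonneg (hCf0 _ _ _) (hV0 _)
  have hmain : (∫⁻ x in Ioi (0:ℝ), ENNReal.ofReal (g x))
      = ∑' k : ℕ, ENNReal.ofReal (innerR k) := by
    rw [hL, tsum_triple_reindex (fun p q s => ENNReal.ofReal (Cf p q s * V (p+q+s)))]
    refine tsum_congr fun k => ?_
    rw [hinnerR_def, ENNReal.ofReal_sum_of_nonneg (fun i _ => Finset.sum_nonneg
      fun n _ => mul_nonneg (hCf0 _ _ _) (hV0 _))]
    refine Finset.sum_congr rfl fun i hi => ?_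
    rw [ENNReal.ofReal_sum_of_nonneg (fun n _ => mul_nonneg (hCf0 _ _ _) (hV0 _))]
    refine Finset.sum_congr rfl fun n hn => ?_
    have hik : i ≤ k := by simpa [Nat.lt_succ_iff] using Finset.mem_range.mp hi
    have hni : n ≤ i := by simpa [Nat.lt_succ_iff] using Finset.mem_range.mp hn
    have hk : n + (i-n) + (k-i) = k := by omega
    rw [hk]
  have hsum : Summable innerR := by
    have h1 : (∑' k : ℕ, ENNReal.ofReal (innerR k)) ≠ ⊤ := by rw [← hmain]; exact hfin
    have h2 := ENNReal.summable_toReal h1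
    refine h2.congr fun k => ?_
    rw [ENNReal.toReal_ofReal (hinnerR0 k)]
  -- measurability of g
  have hgm : AEMeasurable g (volume.restrict (Ioi (0:ℝ))) := by
    have hmeas : Measurable fun x : ℝ =>
        (∑' pqs : ℕ × ℕ × ℕ, ENNReal.ofReal (T pqs.1 pqs.2.1 pqs.2.2 x)).toReal :=
      (Measurable.ennreal_tsum hTm).ennreal_toReal
    refine hmeas.aemeasurable.congr ?_
    refine (ae_restrict_iff' measurableSet_Ioi).2 (Filter.Eventually.of_forall fun x hx => ?_)
    have hx0 : (0:ℝ) < x := hx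
    dsimp only
    have hg0 : 0 ≤ g x := by
      rw [hg_def]
      have := I0_nonneg (b₁*x); have := I0_nonneg (b₂*x)
      have := F11_nonneg hm (z := c*x^2) (by positivity)
      positivity
    rw [← hpt x hx, ENNReal.toReal_ofReal hg0]
  have hint_eq : (∫ x in Ioi (0:ℝ), g x)
      = (∫⁻ x in Ioi (0:ℝ), ENNReal.ofReal (g x)).toReal := by
    refine integral_eq_lintegral_of_nonneg_ae ?_ hgm.aestronglyMeasurable
    refine (ae_restrict_iff' measurableSet_Ioi).2 (Filter.Eventually.of_forall fun x hx => ?_)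
    have hx0 : (0:ℝ) < x := hx
    rw [hg_def]
    have := I0_nonneg (b₁*x); have := I0_nonneg (b₂*x)
    have := F11_nonneg hm (z := c*x^2) (by positivity)
    positivity
  have hfinal : (∫ x in Ioi (0:ℝ), g x) = ∑' k : ℕ, innerR k := by
    rw [hint_eq, hmain, ENNReal.tsum_toReal_eq (fun k => ENNReal.ofReal_ne_top)]
    exact tsum_congr fun k => ENNReal.toReal_ofReal (hinnerR0 k)
  constructor
  · refine hsum.congr fun k => ?_
    rw [hinnerR_def]
  · rw [hfinal]

theorem bivariate_rician_shadowed_pdf_series (σ ρ m K r₁ r₂ : ℝ)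
    (hσ : 0 < σ) (hρ0 : 0 < ρ) (hρ1 : ρ < 1) (hm : 0 < m) (hK : 0 < K)
    (hr₁ : 0 < r₁) (hr₂ : 0 < r₂) :
    Summable (fun k : ℕ => ∑ i ∈ Finset.range (k + 1), ∑ n ∈ Finset.range (i + 1),
      alpha σ ρ m K k i n * r₁ ^ (2 * n + 1) * r₂ ^ (2 * (i - n) + 1) *
        Real.exp (-(r₁ ^ 2 + r₂ ^ 2) / (σ ^ 2 * (1 - ρ)))) ∧
    (8 * Real.rpow (m * ρ / (m * ρ + K)) m / (σ ^ 6 * ρ * (1 - ρ) ^ 2)) * r₁ * r₂ *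
      Real.exp (-(r₁ ^ 2 + r₂ ^ 2) / (σ ^ 2 * (1 - ρ))) *
      (∫ x in Set.Ioi (0 : ℝ),
        x * Real.exp (-(1 + ρ) * x ^ 2 / (σ ^ 2 * ρ * (1 - ρ))) *
          I0 (2 * r₁ * x / (σ ^ 2 * (1 - ρ))) * I0 (2 * r₂ * x / (σ ^ 2 * (1 - ρ))) *
          F11 m (K * x ^ 2 / (σ ^ 2 * ρ * (ρ * m + K)))) =
      ∑' k : ℕ, ∑ i ∈ Finset.range (k + 1), ∑ n ∈ Finset.range (i + 1),
        alpha σ ρ m K k i n * r₁ ^ (2 * n + 1) * r₂ ^ (2 * (i - n) + 1) *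
          Real.exp (-(r₁ ^ 2 + r₂ ^ 2) / (σ ^ 2 * (1 - ρ))) := by
  have hρ1' : (0:ℝ) < 1 - ρ := by linarith
  have hd : (0:ℝ) < σ^2*(1-ρ) := by positivity
  have hmK : (0:ℝ) < ρ*m + K := by positivity
  have ha : (0:ℝ) < (1+ρ)/(σ^2*ρ*(1-ρ)) := by positivity
  have hc : (0:ℝ) < K/(σ^2*ρ*(ρ*m+K)) := by positivity
  have hca : K/(σ^2*ρ*(ρ*m+K)) < (1+ρ)/(σ^2*ρ*(1-ρ)) := by
    rw [div_lt_div_iff₀ (by positivity) (by positivity)]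
    have h1 : (0:ℝ) < σ^2*ρ := by positivity
    nlinarith [mul_pos h1 (mul_pos hρ0 hm), mul_pos h1 (mul_pos hρ0 hK),
      mul_pos h1 (mul_pos (mul_pos hρ0 hρ0) hm)]
  have hb₁ : (0:ℝ) < 2*r₁/(σ^2*(1-ρ)) := by positivity
  have hb₂ : (0:ℝ) < 2*r₂/(σ^2*(1-ρ)) := by positivity
  obtain ⟨hs, hi⟩ := main_core hm ha hc hca hb₁ hb₂
  have hfun : (fun x : ℝ =>
      x * Real.exp (-(1 + ρ) * x ^ 2 / (σ ^ 2 * ρ * (1 - ρ))) *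
        I0 (2 * r₁ * x / (σ ^ 2 * (1 - ρ))) * I0 (2 * r₂ * x / (σ ^ 2 * (1 - ρ))) *
        F11 m (K * x ^ 2 / (σ ^ 2 * ρ * (ρ * m + K))))
      = fun x : ℝ =>
      x * Real.exp (-(((1+ρ)/(σ^2*ρ*(1-ρ)))*x^2)) * I0 ((2*r₁/(σ^2*(1-ρ)))*x)
        * I0 ((2*r₂/(σ^2*(1-ρ)))*x) * F11 m ((K/(σ^2*ρ*(ρ*m+K)))*x^2) := by
    funext x
    rw [show -(1 + ρ) * x ^ 2 / (σ ^ 2 * ρ * (1 - ρ))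
        = -(((1+ρ)/(σ^2*ρ*(1-ρ)))*x^2) by ring,
      show 2 * r₁ * x / (σ ^ 2 * (1 - ρ)) = (2*r₁/(σ^2*(1-ρ)))*x by ring,
      show 2 * r₂ * x / (σ ^ 2 * (1 - ρ)) = (2*r₂/(σ^2*(1-ρ)))*x by ring,
      show K * x ^ 2 / (σ ^ 2 * ρ * (ρ * m + K)) = (K/(σ^2*ρ*(ρ*m+K)))*x^2 by ring]
  set P : ℝ := (8 * Real.rpow (m * ρ / (m * ρ + K)) m / (σ ^ 6 * ρ * (1 - ρ) ^ 2)) * r₁ * r₂ *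
      Real.exp (-(r₁ ^ 2 + r₂ ^ 2) / (σ ^ 2 * (1 - ρ))) with hP_def
  have hterm : ∀ k i n : ℕ, n ≤ i → i ≤ k →
      alpha σ ρ m K k i n * r₁ ^ (2 * n + 1) * r₂ ^ (2 * (i - n) + 1) *
        Real.exp (-(r₁ ^ 2 + r₂ ^ 2) / (σ ^ 2 * (1 - ρ)))
      = P * (((2*r₁/(σ^2*(1-ρ))/2)^(2*n)/(n.factorial : ℝ)^2)
          * ((2*r₂/(σ^2*(1-ρ))/2)^(2*(i-n))/((i-n).factorial : ℝ)^2)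
          * (poch m (k-i) * (K/(σ^2*ρ*(ρ*m+K)))^(k-i)/((k-i).factorial : ℝ)^2)
          * ((k.factorial : ℝ)/(2*((1+ρ)/(σ^2*ρ*(1-ρ)))^(k+1)))) := by
    intro k i n hni hik
    obtain ⟨q, rfl⟩ : ∃ q, i = n + q := ⟨i - n, by omega⟩
    obtain ⟨s, rfl⟩ : ∃ s, k = n + q + s := ⟨k - (n+q), by omega⟩
    simp only [Nat.add_sub_cancel_left, show n+q+s-(n+q) = s by omega,
      show n+q-n = q by omega]
    rw [hP_def, alpha]
    simp only [Nat.add_sub_cancel_left, show n+q+s-(n+q) = s by omega,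
      show n+q-n = q by omega]
    rw [show 2*r₁/(σ^2*(1-ρ))/2 = r₁/(σ^2*(1-ρ)) by ring,
      show 2*r₂/(σ^2*(1-ρ))/2 = r₂/(σ^2*(1-ρ)) by ring,
      div_pow, div_pow]
    have hfn : ((n.factorial : ℝ)) ≠ 0 := by positivity
    have hfq : ((q.factorial : ℝ)) ≠ 0 := by positivity
    have hfs : ((s.factorial : ℝ)) ≠ 0 := by positivity
    have hdne : (σ^2*(1-ρ)) ≠ 0 := ne_of_gt hd
    have hane : ((1+ρ)/(σ^2*ρ*(1-ρ))) ≠ 0 := ne_of_gt ha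
    have hpow1 : (σ^2*(1-ρ))^(2*(n+q)) = (σ^2*(1-ρ))^(2*n) * (σ^2*(1-ρ))^(2*q) := by
      rw [← pow_add]; ring_nf
    have hr1 : r₁ ^ (2*n+1) = r₁^(2*n) * r₁ := by rw [pow_succ]
    have hr2 : r₂ ^ (2*q+1) = r₂^(2*q) * r₂ := by rw [pow_succ]
    field_simp
    have hX : (-(ρ * σ ^ 2) + σ ^ 2) ≠ 0 := by
      rw [show -(ρ*σ^2)+σ^2 = σ^2*(1-ρ) by ring]; exact hdne
    have e1 : (-(ρ * σ ^ 2) + σ ^ 2)⁻¹ ^ (n * 2) * (-(ρ * σ ^ 2) + σ ^ 2) ^ (n * 2) = 1 := by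
      rw [← mul_pow, inv_mul_cancel₀ hX, one_pow]
    have e2 : (-(ρ * σ ^ 2) + σ ^ 2)⁻¹ ^ (q * 2) * (-(ρ * σ ^ 2) + σ ^ 2) ^ (q * 2) = 1 := by
      rw [← mul_pow, inv_mul_cancel₀ hX, one_pow]
    linear_combination (-(Real.rpow (m * ρ / (m * ρ + K)) m * poch m s * r₁ * r₁ ^ (n * 2) * r₂ * r₂ ^ (q * 2)) * ((-(ρ * σ ^ 2) + σ ^ 2)⁻¹ ^ (q * 2) * (-(ρ * σ ^ 2) + σ ^ 2) ^ (q * 2))) * e1 - (Real.rpow (m * ρ / (m * ρ + K)) m * poch m s * r₁ * r₁ ^ (n * 2) * r₂ * r₂ ^ (q * 2)) * e2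
  constructor
  · refine (hs.mul_left P).congr fun k => ?_
    rw [Finset.mul_sum]
    refine Finset.sum_congr rfl fun i hi' => ?_
    rw [Finset.mul_sum]
    refine Finset.sum_congr rfl fun n hn' => ?_
    exact (hterm k i n (by simpa [Nat.lt_succ_iff] using Finset.mem_range.mp hn')
      (by simpa [Nat.lt_succ_iff] using Finset.mem_range.mp hi')).symm
  · rw [hfun, hi, ← tsum_mul_left]
    refine tsum_congr fun k => ?_
    rw [Finset.mul_sum]
    refine Finset.sum_congr rfl fun i hi' => ?_
    rw [Finset.mul_sum]
    refine Finset.sum_congr rfl fun n hn' => ?_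
    exact (hterm k i n (by simpa [Nat.lt_succ_iff] using Finset.mem_range.mp hn')
      (by simpa [Nat.lt_succ_iff] using Finset.mem_range.mp hi')).symm
end

section
/- Let K > 0, m > 0, P > 0, and γ ≥ 0. Then the CDF of the Rician shadowed power distribution satisfies ∫₀^γ (m/(K+m))^m · ((1+K)/P) · exp(−(1+K)x/P) · ₁F₁(m,1; K(1+K)x/((K+m)P)) dx = ∑_{k=0}^∞ ∑_{i=0}^{k} (−1)^{k−i} (m/(K+m))^m · ((m)_i/(i!)²) · (K/(K+m))^i · ((1+K)/P)^{k+1} · γ^{k+1}/((k−i)!(k+1)), where the outer series converges. -/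
/-- Rician shadowed power PDF with Rician factor `K`, shadowing parameter `m`,
and normalized power `P`. -/
noncomputable def fX (K m P x : ℝ) : ℝ :=
  Real.rpow (m / (K + m)) m * ((1 + K) / P) * Real.exp (-(1 + K) * x / P) *
    F11 m (K * (1 + K) * x / ((K + m) * P))

/-- Series coefficient `ᾱ(k,i,P,γ)` of the Rician shadowed power CDF. -/
noncomputable def alphaBar (K m : ℝ) (k i : ℕ) (P γ : ℝ) : ℝ :=
  (-1 : ℝ) ^ (k - i) * Real.rpow (m / (K + m)) m * (poch m i / (Nat.factorial i : ℝ) ^ 2) *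
    (K / (K + m)) ^ i * ((1 + K) / P) ^ (k + 1) * γ ^ (k + 1) /
    ((Nat.factorial (k - i) : ℝ) * ((k : ℝ) + 1))

lemma poch_nonneg {m : ℝ} (hm : 0 ≤ m) (k : ℕ) : 0 ≤ poch m k :=
  Finset.prod_nonneg fun j _ => by positivity

lemma poch_le {m : ℝ} (hm : 0 ≤ m) (k : ℕ) :
    poch m k ≤ (1 + m) ^ k * (Nat.factorial k : ℝ) := by
  have h : poch m k ≤ ∏ j ∈ Finset.range k, ((1 + m) * (j + 1) : ℝ) := by
    refine Finset.prod_le_prod (fun j _ => by positivity) (fun j _ => ?_)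
    nlinarith [Nat.cast_nonneg (α := ℝ) j]
  calc poch m k ≤ ∏ j ∈ Finset.range k, ((1 + m) * (j + 1) : ℝ) := h
    _ = (1 + m) ^ k * ∏ j ∈ Finset.range k, ((j : ℝ) + 1) := by
        rw [Finset.prod_mul_distrib, Finset.prod_const, Finset.card_range]
    _ = (1 + m) ^ k * (Nat.factorial k : ℝ) := by
        congr 1
        rw [← Finset.prod_range_add_one_eq_factorial, Nat.cast_prod]
        push_cast
        rfl

lemma summable_F11_norm {m : ℝ} (hm : 0 ≤ m) (z : ℝ) :
    Summable fun i : ℕ => ‖poch m i * z ^ i / (Nat.factorial i : ℝ) ^ 2‖ := by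
  refine (Real.summable_pow_div_factorial ((1 + m) * |z|)).of_nonneg_of_le
    (fun i => norm_nonneg _) (fun i => ?_)
  have hfac : (0 : ℝ) < (Nat.factorial i : ℝ) := by positivity
  have h1 : ‖poch m i * z ^ i / (Nat.factorial i : ℝ) ^ 2‖
      = poch m i * |z| ^ i / (Nat.factorial i : ℝ) ^ 2 := by
    rw [Real.norm_eq_abs, abs_div, abs_mul, abs_of_nonneg (poch_nonneg hm i), abs_pow,
      abs_of_pos (by positivity : (0:ℝ) < (Nat.factorial i : ℝ) ^ 2)]
  rw [h1, mul_pow]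
  rw [div_le_div_iff₀ (by positivity) hfac]
  have := poch_le hm i
  have h2 : poch m i * |z| ^ i ≤ ((1 + m) ^ i * (Nat.factorial i : ℝ)) * |z| ^ i := by
    apply mul_le_mul_of_nonneg_right this (by positivity)
  calc poch m i * |z| ^ i * (Nat.factorial i : ℝ)
      ≤ ((1 + m) ^ i * (Nat.factorial i : ℝ)) * |z| ^ i * (Nat.factorial i : ℝ) :=
        mul_le_mul_of_nonneg_right h2 hfac.le
    _ = (1 + m) ^ i * |z| ^ i * (Nat.factorial i : ℝ) ^ 2 := by ring

lemma summable_exp_norm (y : ℝ) :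
    Summable fun j : ℕ => ‖y ^ j / (Nat.factorial j : ℝ)‖ := by
  refine (Real.summable_pow_div_factorial |y|).of_nonneg_of_le
    (fun j => norm_nonneg _) (fun j => ?_)
  rw [Real.norm_eq_abs, abs_div, abs_pow,
    abs_of_pos (by positivity : (0:ℝ) < (Nat.factorial j : ℝ))]

lemma exp_tsum (y : ℝ) : Real.exp y = ∑' j : ℕ, y ^ j / (Nat.factorial j : ℝ) := by
  rw [Real.exp_eq_exp_ℝ, NormedSpace.exp_eq_tsum_div]

theorem rician_shadowed_power_cdf_series (K m P γ : ℝ)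
    (hK : 0 < K) (hm : 0 < m) (hP : 0 < P) (hγ : 0 ≤ γ) :
    Summable (fun k : ℕ => ∑ i ∈ Finset.range (k + 1), alphaBar K m k i P γ) ∧
    (∫ x in (0 : ℝ)..γ, fX K m P x) =
      ∑' k : ℕ, ∑ i ∈ Finset.range (k + 1), alphaBar K m k i P γ := by
  set C : ℝ := Real.rpow (m / (K + m)) m with hC
  set b : ℝ := (1 + K) / P with hb
  set c : ℝ := K / (K + m) * b with hc
  have hKm : 0 < K + m := by linarith
  have hbpos : 0 < b := by positivity
  have hcpos : 0 < c := by positivity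
  have hCpos : 0 < C := Real.rpow_pos_of_pos (by positivity) m
  clear_value C b c
  -- the coefficients of the power series of fX
  set d : ℕ → ℝ := fun k => C * b * ∑ i ∈ Finset.range (k + 1),
      poch m i * c ^ i / (Nat.factorial i : ℝ) ^ 2 *
        ((-b) ^ (k - i) / (Nat.factorial (k - i) : ℝ)) with hd
  clear_value d
  -- pointwise power series expansion of fX
  have hfX : ∀ x : ℝ, fX K m P x = ∑' k : ℕ, d k * x ^ k := by
    intro x
    have harg : K * (1 + K) * x / ((K + m) * P) = c * x := by
      have hP' : P ≠ 0 := hP.ne'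
      have hKm' : (K + m) ≠ 0 := hKm.ne'
      rw [hc, hb]
      first
      | (field_simp; ring)
      | field_simp
    have hexparg : -(1 + K) * x / P = -(b * x) := by rw [hb]; ring
    have hF : F11 m (c * x) * Real.exp (-(b * x)) =
        ∑' k : ℕ, ∑ i ∈ Finset.range (k + 1),
          (poch m (i) * (c * x) ^ i / (Nat.factorial i : ℝ) ^ 2) *
            ((-(b * x)) ^ (k - i) / (Nat.factorial (k - i) : ℝ)) := by
      rw [F11, exp_tsum]
      exact tsum_mul_tsum_eq_tsum_sum_range_of_summable_norm
        (summable_F11_norm hm.le (c * x)) (summable_exp_norm (-(b * x)))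
    rw [fX, harg, hexparg, ← hC, ← hb]
    have : C * b * (F11 m (c * x) * Real.exp (-(b * x))) = ∑' k : ℕ, d k * x ^ k := by
      rw [hF, ← tsum_mul_left]
      refine tsum_congr fun k => ?_
      simp only [hd]
      rw [Finset.mul_sum, Finset.mul_sum, Finset.sum_mul]
      refine Finset.sum_congr rfl fun i hi => ?_
      have hik : i ≤ k := Nat.lt_succ_iff.mp (Finset.mem_range.mp hi)
      have hx : x ^ i * x ^ (k - i) = x ^ k := by
        rw [← pow_add, Nat.add_sub_cancel' hik]
      have h1 : (c * x) ^ i = c ^ i * x ^ i := mul_pow _ _ _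
      have h2 : (-(b * x)) ^ (k - i) = (-b) ^ (k - i) * x ^ (k - i) := by
        rw [neg_mul_eq_neg_mul, mul_pow]
      rw [h1, h2]
      field_simp
      rw [← hx]; ring
    rw [← this]; ring
  -- norm bound on the coefficients
  set D : ℕ → ℝ := fun k => C * b * ∑ i ∈ Finset.range (k + 1),
      (poch m i * (c * γ) ^ i / (Nat.factorial i : ℝ) ^ 2) *
        ((b * γ) ^ (k - i) / (Nat.factorial (k - i) : ℝ)) with hD
  clear_value D
  have hDsum : Summable D := by
    rw [hD]
    refine Summable.mul_left _ ?_
    have := summable_sum_mul_range_of_summable_norm'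
      (f := fun i : ℕ => poch m i * (c * γ) ^ i / (Nat.factorial i : ℝ) ^ 2)
      (g := fun j : ℕ => (b * γ) ^ j / (Nat.factorial j : ℝ))
      (summable_F11_norm hm.le (c * γ)) ((summable_F11_norm hm.le (c * γ)).of_norm)
      (summable_exp_norm (b * γ)) ((summable_exp_norm (b * γ)).of_norm)
    exact this
  have hDnonneg : ∀ k, 0 ≤ D k := by
    intro k
    rw [hD]
    refine mul_nonneg (by positivity) (Finset.sum_nonneg fun i _ => ?_)
    have := poch_nonneg hm.le i
    positivity
  have hdbound : ∀ k, |d k| * γ ^ k ≤ D k := by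
    intro k
    simp only [hd, hD]
    rw [abs_mul, abs_of_pos (by positivity : (0:ℝ) < C * b), mul_assoc]
    refine mul_le_mul_of_nonneg_left ?_ (by positivity)
    calc |∑ i ∈ Finset.range (k + 1), poch m i * c ^ i / (Nat.factorial i : ℝ) ^ 2 *
            ((-b) ^ (k - i) / (Nat.factorial (k - i) : ℝ))| * γ ^ k
        ≤ (∑ i ∈ Finset.range (k + 1), |poch m i * c ^ i / (Nat.factorial i : ℝ) ^ 2 *
            ((-b) ^ (k - i) / (Nat.factorial (k - i) : ℝ))|) * γ ^ k := by
          apply mul_le_mul_of_nonneg_right (Finset.abs_sum_le_sum_abs _ _) (by positivity)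
      _ = ∑ i ∈ Finset.range (k + 1), |poch m i * c ^ i / (Nat.factorial i : ℝ) ^ 2 *
            ((-b) ^ (k - i) / (Nat.factorial (k - i) : ℝ))| * γ ^ k := by
          rw [Finset.sum_mul]
      _ ≤ ∑ i ∈ Finset.range (k + 1),
            (poch m i * (c * γ) ^ i / (Nat.factorial i : ℝ) ^ 2) *
              ((b * γ) ^ (k - i) / (Nat.factorial (k - i) : ℝ)) := by
          refine Finset.sum_le_sum fun i hi => ?_
          have hik : i ≤ k := Nat.lt_succ_iff.mp (Finset.mem_range.mp hi)
          have hγk : γ ^ i * γ ^ (k - i) = γ ^ k := by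
            rw [← pow_add, Nat.add_sub_cancel' hik]
          have hpn := poch_nonneg hm.le i
          have habs : |poch m i * c ^ i / (Nat.factorial i : ℝ) ^ 2 *
              ((-b) ^ (k - i) / (Nat.factorial (k - i) : ℝ))|
              = poch m i * c ^ i / (Nat.factorial i : ℝ) ^ 2 *
                (b ^ (k - i) / (Nat.factorial (k - i) : ℝ)) := by
            simp [abs_mul, abs_div, abs_pow, abs_neg, abs_of_nonneg hpn,
              abs_of_pos hcpos, abs_of_pos hbpos, Nat.abs_cast]
          rw [habs, mul_pow, mul_pow, ← hγk]
          have hfi : (0:ℝ) < (Nat.factorial i : ℝ) ^ 2 := by positivity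
          have hfki : (0:ℝ) < (Nat.factorial (k - i) : ℝ) := by positivity
          apply le_of_eq
          ring
  -- the integral of each term
  have hterm : ∀ k : ℕ, (∫ x in Set.Ioc (0:ℝ) γ, d k * x ^ k) =
      d k * (γ ^ (k + 1) / ((k : ℝ) + 1)) := by
    intro k
    rw [← intervalIntegral.integral_of_le hγ, intervalIntegral.integral_const_mul,
      integral_pow]
    norm_num
  -- the lintegral bound
  have hlint : ∀ k : ℕ, (∫⁻ x in Set.Ioc (0:ℝ) γ, ‖d k * x ^ k‖₊) ≤
      ENNReal.ofReal (D k * γ) := by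
    intro k
    calc (∫⁻ x in Set.Ioc (0:ℝ) γ, ‖d k * x ^ k‖₊)
        ≤ ∫⁻ _ in Set.Ioc (0:ℝ) γ, ENNReal.ofReal (|d k| * γ ^ k) := by
          refine MeasureTheory.setLIntegral_mono measurable_const fun x hx => ?_
          rw [← enorm_eq_nnnorm, ← ofReal_norm]
          apply ENNReal.ofReal_le_ofReal
          rw [Real.norm_eq_abs, abs_mul, abs_pow]
          refine mul_le_mul_of_nonneg_left (pow_le_pow_left₀ (abs_nonneg x) ?_ k)
            (abs_nonneg _)
          rw [abs_of_pos hx.1]; exact hx.2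
      _ = ENNReal.ofReal (|d k| * γ ^ k) * ENNReal.ofReal γ := by
          rw [MeasureTheory.setLIntegral_const, Real.volume_Ioc, sub_zero]
      _ ≤ ENNReal.ofReal (D k) * ENNReal.ofReal γ := by
          exact mul_le_mul_left (ENNReal.ofReal_le_ofReal (hdbound k)) _
      _ = ENNReal.ofReal (D k * γ) := by
          rw [ENNReal.ofReal_mul (hDnonneg k)]
  -- summability of the integrals series
  have hsummable_int : Summable (fun k : ℕ => d k * (γ ^ (k + 1) / ((k : ℝ) + 1))) := by
    refine Summable.of_norm_bounded (hDsum.mul_right γ) fun k => ?_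
    rw [Real.norm_eq_abs, abs_mul, abs_div]
    calc |d k| * (|γ ^ (k + 1)| / |(k : ℝ) + 1|)
        ≤ |d k| * γ ^ (k + 1) := by
          refine mul_le_mul_of_nonneg_left ?_ (abs_nonneg _)
          rw [abs_pow, abs_of_nonneg hγ]
          refine div_le_self (by positivity) ?_
          rw [abs_of_pos (by positivity : (0:ℝ) < (k:ℝ) + 1)]
          linarith [Nat.cast_nonneg (α := ℝ) k]
      _ = |d k| * γ ^ k * γ := by rw [pow_succ]; ring
      _ ≤ D k * γ := mul_le_mul_of_nonneg_right (hdbound k) hγ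
  -- identify the per-k sums with alphaBar sums
  have hid : ∀ k : ℕ, d k * (γ ^ (k + 1) / ((k : ℝ) + 1)) =
      ∑ i ∈ Finset.range (k + 1), alphaBar K m k i P γ := by
    intro k
    simp only [hd]
    rw [Finset.mul_sum, Finset.sum_mul]
    refine Finset.sum_congr rfl fun i hi => ?_
    have hik : i ≤ k := Nat.lt_succ_iff.mp (Finset.mem_range.mp hi)
    rw [alphaBar, ← hb, ← hC]
    have hbk : b ^ (k + 1) = b * (b ^ i * b ^ (k - i)) := by
      rw [← pow_add, Nat.add_sub_cancel' hik, ← pow_succ']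
    have hneg : (-b) ^ (k - i) = (-1 : ℝ) ^ (k - i) * b ^ (k - i) := by
      rw [← neg_one_mul, mul_pow]
    rw [hc, hneg, hbk, mul_pow]
    have hfi : ((Nat.factorial i : ℝ)) ≠ 0 := by positivity
    have hfki : ((Nat.factorial (k - i) : ℝ)) ≠ 0 := by positivity
    have hk1 : ((k : ℝ) + 1) ≠ 0 := by positivity
    field_simp
  constructor
  · exact (hsummable_int.congr hid)
  · rw [intervalIntegral.integral_of_le hγ]
    have hmeas : ∀ k : ℕ, MeasureTheory.AEStronglyMeasurable
        (fun x : ℝ => d k * x ^ k) (MeasureTheory.volume.restrict (Set.Ioc 0 γ)) :=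
      fun k => ((continuous_const.mul (continuous_pow k)).aestronglyMeasurable)
    have hlidc : (∑' k : ℕ, ∫⁻ x in Set.Ioc (0:ℝ) γ, ‖d k * x ^ k‖₊) ≠ ⊤ := by
      refine ne_top_of_le_ne_top ?_ (ENNReal.tsum_le_tsum hlint)
      rw [← ENNReal.ofReal_tsum_of_nonneg (fun k => mul_nonneg (hDnonneg k) hγ)
        (hDsum.mul_right γ)]
      exact ENNReal.ofReal_ne_top
    have := MeasureTheory.integral_tsum hmeas hlidc
    calc (∫ x in Set.Ioc (0:ℝ) γ, fX K m P x)
        = ∫ x in Set.Ioc (0:ℝ) γ, ∑' k : ℕ, d k * x ^ k := by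
          refine MeasureTheory.integral_congr_ae (Filter.Eventually.of_forall fun x => hfX x)
      _ = ∑' k : ℕ, ∫ x in Set.Ioc (0:ℝ) γ, d k * x ^ k := this
      _ = ∑' k : ℕ, d k * (γ ^ (k + 1) / ((k : ℝ) + 1)) := by
          exact tsum_congr hterm
      _ = ∑' k : ℕ, ∑ i ∈ Finset.range (k + 1), alphaBar K m k i P γ := tsum_congr hid
end
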